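/- Let L ⊆ ℕ and define its characteristic 'density on cycles' acceptance: suppose L = {m : ∃ k, m mod j_k ∈ B_k} where the cycles (j_k, B_k) are pairwise non-overlapping (unambiguous). Then L = ℕ (the acceptor is universal) if and only if Σ_k |B_k| / j_k = 1. -/

import Mathlib

/-- Universality of an unambiguous union of cycles via densities: the acceptor is
universal iff the densities `|B k| / j k` of its cycles sum to `1`. -/
theorem stmt7 (k : ℕ) (j : Fin k → ℕ) (B : Fin k → Finset ℕ)
    (hj : ∀ i, 0 < j i) (hB : ∀ i, B i ⊆ Finset.range (j i))
    (hunamb : ∀ m : ℕ, ∀ i i' : Fin k, m % j i ∈ B i → m % j i' ∈ B i' → i = i')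
    (L : Set ℕ) (hL : ∀ m, m ∈ L ↔ ∃ i, m % j i ∈ B i) :
    (∀ m, m ∈ L) ↔ (∑ i, ((B i).card : ℚ) / (j i : ℚ)) = 1 := by
  classical
  set N : ℕ := ∏ i, j i with hNdef
  have hN : 0 < N := Finset.prod_pos (fun i _ => hj i)
  have hdvd : ∀ i, j i ∣ N := fun i => Finset.dvd_prod_of_mem j (Finset.mem_univ i)
  set S : Fin k → Finset ℕ := fun i => (Finset.range N).filter (fun m => m % j i ∈ B i)
    with hSdef
  -- card of each S i
  have hcard : ∀ i, (S i).card = (B i).card * (N / j i) := by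
    intro i
    rw [show (B i).card * (N / j i) = ((B i ×ˢ Finset.range (N / j i)).card) by
      simp [Finset.card_product]]
    apply Finset.card_bij (fun m _ => (m % j i, m / j i))
    · intro m hm
      simp only [hSdef, Finset.mem_filter, Finset.mem_range] at hm
      simp only [Finset.mem_product, Finset.mem_range]
      exact ⟨hm.2, Nat.div_lt_div_of_lt_of_dvd (hdvd i) hm.1⟩
    · intro a ha b hb hab
      simp only [Prod.mk.injEq] at hab
      rw [← Nat.div_add_mod a (j i), ← Nat.div_add_mod b (j i), hab.1, hab.2]
    · intro ⟨b, q⟩ hp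
      simp only [Finset.mem_product, Finset.mem_range] at hp
      have hb : b < j i := Finset.mem_range.mp (hB i hp.1)
      refine ⟨b + q * j i, ?_, ?_⟩
      · simp only [hSdef, Finset.mem_filter, Finset.mem_range]
        constructor
        · have : (q + 1) * j i ≤ (N / j i) * j i :=
            Nat.mul_le_mul_right _ hp.2
          rw [Nat.div_mul_cancel (hdvd i)] at this
          nlinarith [hj i]
        · rw [Nat.add_mul_mod_self_right, Nat.mod_eq_of_lt hb]
          exact hp.1
      · rw [Nat.add_mul_mod_self_right, Nat.mod_eq_of_lt hb,
          Nat.add_mul_div_right _ _ (hj i), Nat.div_eq_of_lt hb]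
        simp
  -- disjointness and union
  have hdisj : ∀ i ∈ Finset.univ, ∀ i' ∈ Finset.univ, i ≠ i' →
      Disjoint (S i) (S i') := by
    intro i _ i' _ hne
    refine Finset.disjoint_left.mpr ?_
    intro m hmi hmi'
    simp only [hSdef, Finset.mem_filter] at hmi hmi'
    exact hne (hunamb m i i' hmi.2 hmi'.2)
  have hunion : (Finset.univ.biUnion S) =
      (Finset.range N).filter (fun m => ∃ i, m % j i ∈ B i) := by
    ext m
    simp only [hSdef, Finset.mem_biUnion, Finset.mem_filter, Finset.mem_univ,
      true_and]
    tauto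
  have hcardT : ((Finset.range N).filter (fun m => ∃ i, m % j i ∈ B i)).card
      = ∑ i, (B i).card * (N / j i) := by
    rw [← hunion, Finset.card_biUnion hdisj]
    exact Finset.sum_congr rfl (fun i _ => hcard i)
  -- universality ↔ every m < N accepted
  have hper : (∀ m, m ∈ L) ↔ ∀ m < N, ∃ i, m % j i ∈ B i := by
    constructor
    · intro h m _
      exact (hL m).mp (h m)
    · intro h m
      rw [hL]
      obtain ⟨i, hi⟩ := h (m % N) (Nat.mod_lt _ hN)
      refine ⟨i, ?_⟩
      rwa [Nat.mod_mod_of_dvd _ (hdvd i)] at hi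
  -- ↔ card equality in ℕ
  have hsub : (Finset.range N).filter (fun m => ∃ i, m % j i ∈ B i) ⊆ Finset.range N :=
    Finset.filter_subset _ _
  have hcards : (∀ m < N, ∃ i, m % j i ∈ B i) ↔
      (∑ i, (B i).card * (N / j i)) = N := by
    rw [← hcardT]
    constructor
    · intro h
      rw [Finset.filter_true_of_mem (fun m hm => h m (Finset.mem_range.mp hm)),
        Finset.card_range]
    · intro h m hm
      have : (Finset.range N).filter (fun m => ∃ i, m % j i ∈ B i) = Finset.range N :=
        Finset.eq_of_subset_of_card_le hsub (by rw [h, Finset.card_range])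
      have := this ▸ (Finset.mem_range.mpr hm)
      exact (Finset.mem_filter.mp this).2
  -- ℚ computation
  have hQ : (∑ i, (B i).card * (N / j i)) = N ↔
      (∑ i, ((B i).card : ℚ) / (j i : ℚ)) = 1 := by
    have hNe : (N : ℚ) ≠ 0 := Nat.cast_ne_zero.mpr hN.ne'
    have hterm : ∀ i, (((B i).card * (N / j i) : ℕ) : ℚ)
        = (N : ℚ) * (((B i).card : ℚ) / (j i : ℚ)) := by
      intro i
      have hji : ((j i : ℚ)) ≠ 0 := Nat.cast_ne_zero.mpr (hj i).ne'
      rw [Nat.cast_mul, Nat.cast_div (hdvd i) hji]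
      field_simp
    constructor
    · intro h
      have : ((∑ i, (B i).card * (N / j i) : ℕ) : ℚ) = (N : ℚ) := by exact_mod_cast h
      rw [Nat.cast_sum] at this
      simp_rw [hterm] at this
      rw [← Finset.mul_sum] at this
      field_simp at this
      linarith [this]
    · intro h
      have : ((∑ i, (B i).card * (N / j i) : ℕ) : ℚ) = (N : ℚ) := by
        rw [Nat.cast_sum]
        simp_rw [hterm]
        rw [← Finset.mul_sum, h, mul_one]
      exact_mod_cast this
  rw [hper, hcards, hQ]
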